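/- Let G be a digraph on at least two vertices whose underlying graph is connected, and let T be a ditree such that γ(T □ G) = γ(T) · γ(G). Then T does not contain a strong support vertex that is adjacent (in the underlying tree) to two non-isolated leaves. -/

import Mathlib

open SimpleGraph

variable {V W : Type*}

/-- The closed out-neighborhood of `v` in the digraph with arc relation `A`. -/
def NplusC (A : V → V → Prop) (v : V) : Set V := insert v {u | A v u}

/-- The closed in-neighborhood of `v`. -/
def NminusC (A : V → V → Prop) (v : V) : Set V := insert v {u | A u v}

/-- The open out-neighborhood of `v`. -/
def NplusO (A : V → V → Prop) (v : V) : Set V := {u | A v u}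

/-- The open in-neighborhood of `v`. -/
def NminusO (A : V → V → Prop) (v : V) : Set V := {u | A u v}

/-- `S` is a dominating set: every vertex is in a closed out-neighborhood of a member of `S`. -/
def IsDomSet (A : V → V → Prop) (S : Set V) : Prop := ∀ u, ∃ v ∈ S, u ∈ NplusC A v

/-- The domination number of a digraph. -/
noncomputable def domNum (V : Type*) [Fintype V] (A : V → V → Prop) : ℕ :=
  sInf {n | ∃ S : Set V, IsDomSet A S ∧ S.ncard = n}

/-- `P` is a packing: closed in-neighborhoods of members are pairwise disjoint. -/
def IsPacking (A : V → V → Prop) (P : Set V) : Prop :=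
  P.Pairwise fun x y => Disjoint (NminusC A x) (NminusC A y)

/-- The packing number of a digraph. -/
noncomputable def packNum (V : Type*) [Fintype V] (A : V → V → Prop) : ℕ :=
  sSup {n | ∃ P : Set V, IsPacking A P ∧ P.ncard = n}

/-- `S` is a total dominating set: every vertex has an in-neighbor in `S`. -/
def IsTotalDomSet (A : V → V → Prop) (S : Set V) : Prop := ∀ u, ∃ v ∈ S, A v u

/-- The total domination number of a digraph. -/
noncomputable def totalDomNum (V : Type*) [Fintype V] (A : V → V → Prop) : ℕ :=
  sInf {n | ∃ S : Set V, IsTotalDomSet A S ∧ S.ncard = n}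

/-- `P` is an open packing: open in-neighborhoods of members are pairwise disjoint. -/
def IsOpenPacking (A : V → V → Prop) (P : Set V) : Prop :=
  P.Pairwise fun x y => Disjoint (NminusO A x) (NminusO A y)

/-- The open packing number of a digraph. -/
noncomputable def openPackNum (V : Type*) [Fintype V] (A : V → V → Prop) : ℕ :=
  sSup {n | ∃ P : Set V, IsOpenPacking A P ∧ P.ncard = n}

/-- The underlying (simple) graph of a digraph. -/
def ugr (A : V → V → Prop) : SimpleGraph V := SimpleGraph.fromRel A

/-- A ditree is a digraph whose underlying graph is a tree. -/
def IsDitree (A : V → V → Prop) : Prop := (ugr A).IsTree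

/-- Arc relation of the Cartesian product of two digraphs. -/
def cartArc (A : V → V → Prop) (B : W → W → Prop) : V × W → V × W → Prop :=
  fun p q => (p.1 = q.1 ∧ B p.2 q.2) ∨ (p.2 = q.2 ∧ A p.1 q.1)

/-- Arc relation of the direct product of two digraphs. -/
def dirArc (A : V → V → Prop) (B : W → W → Prop) : V × W → V × W → Prop :=
  fun p q => A p.1 q.1 ∧ B p.2 q.2

/-- The closed in-neighborhood graph of a digraph: distinct vertices are adjacent iff
their closed in-neighborhoods intersect. -/
def Ncg (A : V → V → Prop) : SimpleGraph V :=
  SimpleGraph.fromRel (fun u v => (NminusC A u ∩ NminusC A v).Nonempty)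

/-- The open in-neighborhood graph of a digraph: distinct vertices are adjacent iff
their open in-neighborhoods intersect. -/
def Nog (A : V → V → Prop) : SimpleGraph V :=
  SimpleGraph.fromRel (fun u v => (NminusO A u ∩ NminusO A v).Nonempty)

namespace Stmt17Aux

variable {V : Type*} {G : SimpleGraph V}

lemma path_unique (hG : G.IsTree) {a b : V} {p q : G.Walk a b}
    (hp : p.IsPath) (hq : q.IsPath) : p = q :=
  (hG.existsUnique_path a b).unique hp hq

noncomputable def pth (hG : G.IsTree) (r x : V) : G.Walk x r :=
  (hG.existsUnique_path x r).exists.choose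

lemma pth_isPath (hG : G.IsTree) (r x : V) : (pth hG r x).IsPath :=
  (hG.existsUnique_path x r).exists.choose_spec

noncomputable def depth (hG : G.IsTree) (r x : V) : ℕ := (pth hG r x).length

noncomputable def par (hG : G.IsTree) (r x : V) : V := (pth hG r x).getVert 1

lemma pth_r (hG : G.IsTree) (r : V) : pth hG r r = Walk.nil :=
  path_unique hG (pth_isPath hG r r) Walk.IsPath.nil

lemma pth_cons (hG : G.IsTree) (r : V) {x : V} (hx : x ≠ r) :
    ∃ h : G.Adj x (par hG r x), pth hG r x = Walk.cons h (pth hG r (par hG r x)) := by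
  obtain ⟨y, hadj, q, hq⟩ := Walk.exists_eq_cons_of_ne hx (pth hG r x)
  have hy : par hG r x = y := by
    rw [par, hq, Walk.getVert_cons_succ, Walk.getVert_zero]
  subst hy
  have hqp : q.IsPath := by
    have := pth_isPath hG r x
    rw [hq] at this
    exact this.of_cons
  refine ⟨hadj, ?_⟩
  rw [hq, path_unique hG (pth_isPath hG r _) hqp]

lemma depth_par (hG : G.IsTree) (r : V) {x : V} (hx : x ≠ r) :
    depth hG r x = depth hG r (par hG r x) + 1 := by
  obtain ⟨h, hc⟩ := pth_cons hG r hx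
  rw [depth, hc, Walk.length_cons]
  rfl

lemma adj_par (hG : G.IsTree) (r : V) {x y : V} (hxy : G.Adj x y) :
    (x ≠ r ∧ par hG r x = y) ∨ (y ≠ r ∧ par hG r y = x) := by
  classical
  by_cases hx : x ∈ (pth hG r y).support
  · right
    have hyx : y ≠ x := hxy.ne'
    have he : (Walk.cons hxy.symm (Walk.nil : G.Walk x x)).IsPath := by
      simp [Walk.cons_isPath_iff, hyx]
    have hte : (pth hG r y).takeUntil x hx = Walk.cons hxy.symm Walk.nil :=
      path_unique hG ((pth_isPath hG r y).takeUntil hx) he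
    have hspec := (pth hG r y).take_spec hx
    rw [hte] at hspec
    rw [Walk.cons_append, Walk.nil_append] at hspec
    have hyr : y ≠ r := by
      rintro rfl
      have := hspec.trans (pth_r hG _)
      exact absurd (congrArg Walk.length this) (by simp)
    refine ⟨hyr, ?_⟩
    rw [par, ← hspec, Walk.getVert_cons_succ, Walk.getVert_zero]
  · left
    have hc : (Walk.cons hxy (pth hG r y)).IsPath := (pth_isPath hG r y).cons hx
    have hu : pth hG r x = Walk.cons hxy (pth hG r y) :=
      path_unique hG (pth_isPath hG r x) hc
    have hxr : x ≠ r := by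
      rintro rfl
      exact hx (Walk.end_mem_support _)
    refine ⟨hxr, ?_⟩
    rw [par, hu, Walk.getVert_cons_succ, Walk.getVert_zero]


variable {V : Type*} {G : SimpleGraph V}

open Classical in
noncomputable def topv (hG : G.IsTree) (r : V) (F : Set V) (w : V) : V :=
  if par hG r w ∈ F ∧ w ≠ r then par hG r w else w

section Star

variable (hG : G.IsTree) (r : V) (F : V → Set V)

lemma topv_mem (hself : ∀ w, w ∈ F w) (w : V) : topv hG r (F w) w ∈ F w := by
  rw [topv]
  split
  · next h => exact h.1
  · exact hself w

lemma P1 (hstar : ∀ w x, x ∈ F w → x = w ∨ G.Adj x w) {w x : V} (hx : x ∈ F w) :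
    topv hG r (F w) w = x ∨
    (topv hG r (F w) w = par hG r x ∧ x ≠ r) ∨
    (topv hG r (F w) w = par hG r (par hG r x) ∧ x ≠ r ∧ par hG r x ≠ r ∧
      par hG r x = w) := by
  rcases hstar w x hx with rfl | hadj
  · rw [topv]
    split
    · next h => exact Or.inr (Or.inl ⟨rfl, h.2⟩)
    · exact Or.inl rfl
  · rcases adj_par hG r hadj with ⟨hxr, hpx⟩ | ⟨hwr, hpw⟩
    · rw [topv]
      split
      · next h =>
        exact Or.inr (Or.inr ⟨by rw [hpx], hxr, by rw [hpx]; exact h.2, hpx⟩)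
      · exact Or.inr (Or.inl ⟨by rw [hpx], hxr⟩)
    · have hxF : par hG r w ∈ F w := by rw [hpw]; exact hx
      rw [topv, if_pos ⟨hxF, hwr⟩]
      exact Or.inl hpw

lemma key_helly (hself : ∀ w, w ∈ F w)
    (hstar : ∀ w x, x ∈ F w → x = w ∨ G.Adj x w) {w w₀ x : V}
    (hmax : depth hG r (topv hG r (F w) w) ≤ depth hG r (topv hG r (F w₀) w₀))
    (hx : x ∈ F w) (hx0 : x ∈ F w₀) : topv hG r (F w₀) w₀ ∈ F w := by
  rcases P1 hG r F hstar hx0 with h1 | ⟨h2, hxr⟩ | ⟨h3, hxr, hpxr, _⟩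
  · rw [h1]; exact hx
  · rcases P1 hG r F hstar hx with g1 | ⟨g2, _⟩ | ⟨g3, _, _, gpw⟩
    · exfalso
      rw [h2, g1] at hmax
      have := depth_par hG r hxr
      omega
    · rw [h2, ← g2]; exact topv_mem hG r F hself w
    · rw [h2, gpw]; exact hself w
  · rcases P1 hG r F hstar hx with g1 | ⟨g2, gxr⟩ | ⟨g3, _, _, _⟩
    · exfalso
      rw [h3, g1] at hmax
      have := depth_par hG r hxr
      have := depth_par hG r hpxr
      omega
    · exfalso
      rw [h3, g2] at hmax
      have := depth_par hG r hpxr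
      omega
    · rw [h3, ← g3]; exact topv_mem hG r F hself w

end Star

lemma mem_NplusC_iff {V : Type*} (A : V → V → Prop) {u c : V} :
    u ∈ NplusC A c ↔ c ∈ NminusC A u := by
  simp only [NplusC, NminusC, Set.mem_insert_iff, Set.mem_setOf_eq]
  rw [eq_comm]

lemma mem_NminusC_self {V : Type*} (A : V → V → Prop) (w : V) : w ∈ NminusC A w :=
  Set.mem_insert _ _

lemma greedy {V : Type*} [Fintype V] (A : V → V → Prop) (hirr : ∀ v, ¬ A v v)
    (hT : IsDitree A) (r : V) :
    ∀ n (W : Set V), W.ncard ≤ n →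
      ∃ P D : Set V, P ⊆ W ∧ IsPacking A P ∧ D.ncard ≤ P.ncard ∧
        ∀ w ∈ W, ∃ c ∈ D, c ∈ NminusC A w := by
  classical
  have hself : ∀ w, w ∈ NminusC A w := mem_NminusC_self A
  have hstar : ∀ w x, x ∈ NminusC A w → x = w ∨ (ugr A).Adj x w := by
    intro w x hx
    rcases hx with rfl | hx
    · exact Or.inl rfl
    · refine Or.inr ((SimpleGraph.fromRel_adj A x w).mpr ⟨?_, Or.inl hx⟩)
      rintro rfl; exact hirr x hx
  intro n
  induction n with
  | zero =>
    intro W hW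
    have hWe : W = ∅ := by
      rw [← Set.ncard_eq_zero W.toFinite]
      omega
    subst hWe
    exact ⟨∅, ∅, Set.empty_subset _, Set.pairwise_empty _, le_rfl, by simp⟩
  | succ n ih =>
    intro W hW
    rcases W.eq_empty_or_nonempty with rfl | hne
    · exact ⟨∅, ∅, Set.empty_subset _, Set.pairwise_empty _, le_rfl, by simp⟩
    · obtain ⟨w₀, hw₀m, hmax⟩ := W.toFinite.toFinset.exists_max_image
        (fun w => depth hT r (topv hT r (NminusC A w) w))
        (by rwa [Set.Finite.toFinset_nonempty])
      rw [Set.Finite.mem_toFinset] at hw₀m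
      set c := topv hT r (NminusC A w₀) w₀ with hcdef
      set W' := {w ∈ W | Disjoint (NminusC A w) (NminusC A w₀)} with hW'def
      have hw₀not : w₀ ∉ W' := by
        intro h
        exact (Set.not_disjoint_iff.mpr ⟨w₀, hself w₀, hself w₀⟩) h.2
      have hcard : W'.ncard ≤ n := by
        have h1 : W' ⊆ W \ {w₀} := by
          intro w hw
          refine ⟨hw.1, ?_⟩
          simp only [Set.mem_singleton_iff]
          rintro rfl
          exact hw₀not hw
        have h2 := Set.ncard_le_ncard h1 W.toFinite.diff
        have h3 : (W \ {w₀}).ncard = W.ncard - 1 :=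
          Set.ncard_diff_singleton_of_mem hw₀m
        have h4 : 1 ≤ W.ncard := (Set.ncard_pos W.toFinite).mpr hne
        omega
      obtain ⟨P, D, hPW, hpack, hDP, hdom⟩ := ih W' hcard
      have hw₀P : w₀ ∉ P := fun h => hw₀not (hPW h)
      refine ⟨insert w₀ P, insert c D, ?_, ?_, ?_, ?_⟩
      · exact Set.insert_subset hw₀m (hPW.trans fun w hw => hw.1)
      · refine Set.pairwise_insert.mpr
          ⟨hpack, fun p hp _ => ⟨((hPW hp).2).symm, (hPW hp).2⟩⟩
      · calc (insert c D).ncard ≤ D.ncard + 1 := Set.ncard_insert_le _ _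
          _ ≤ P.ncard + 1 := by omega
          _ = (insert w₀ P).ncard := (Set.ncard_insert_of_notMem hw₀P P.toFinite).symm
      · intro w hw
        by_cases hw' : w ∈ W'
        · obtain ⟨d, hd, hdm⟩ := hdom w hw'
          exact ⟨d, Set.mem_insert_of_mem _ hd, hdm⟩
        · have hnd : ¬ Disjoint (NminusC A w) (NminusC A w₀) := fun h => hw' ⟨hw, h⟩
          obtain ⟨x, hx1, hx2⟩ := Set.not_disjoint_iff.mp hnd
          refine ⟨c, Set.mem_insert _ _, ?_⟩
          exact key_helly hT r (fun w => NminusC A w) hself hstar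
            (hmax w (by rwa [Set.Finite.mem_toFinset])) hx1 hx2

lemma exists_min_domset {V : Type*} [Fintype V] (A : V → V → Prop) :
    ∃ S : Set V, IsDomSet A S ∧ S.ncard = domNum V A := by
  have hne : {n | ∃ S : Set V, IsDomSet A S ∧ S.ncard = n}.Nonempty :=
    ⟨(Set.univ : Set V).ncard, Set.univ,
      fun u => ⟨u, Set.mem_univ u, Set.mem_insert _ _⟩, rfl⟩
  exact Nat.sInf_mem hne

lemma domNum_le {V : Type*} [Fintype V] {A : V → V → Prop} {S : Set V}
    (hS : IsDomSet A S) : domNum V A ≤ S.ncard :=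
  Nat.sInf_le ⟨S, hS, rfl⟩

lemma domNum_pos {V : Type*} [Fintype V] [Nonempty V] (A : V → V → Prop) :
    1 ≤ domNum V A := by
  obtain ⟨S, hS, hc⟩ := exists_min_domset A
  rcases Nat.eq_zero_or_pos (domNum V A) with h | h
  · exfalso
    rw [h] at hc
    have hSe : S = ∅ := (Set.ncard_eq_zero S.toFinite).mp hc
    obtain ⟨s, hs, _⟩ := hS (Classical.arbitrary V)
    rw [hSe] at hs
    exact hs
  · exact h

lemma sum_ncard_eq {α β : Type*} [Finite β] (Q : Finset α) (R : α → Set β)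
    (hdisj : ∀ p ∈ Q, ∀ q ∈ Q, p ≠ q → Disjoint (R p) (R q)) :
    ∑ p ∈ Q, (R p).ncard = (⋃ p ∈ Q, R p).ncard := by
  classical
  induction Q using Finset.induction_on with
  | empty => simp
  | @insert a s ha ih =>
    have hdisj' : ∀ p ∈ s, ∀ q ∈ s, p ≠ q → Disjoint (R p) (R q) := fun p hp q hq h =>
      hdisj p (Finset.mem_insert_of_mem hp) q (Finset.mem_insert_of_mem hq) h
    have hd : Disjoint (R a) (⋃ p ∈ s, R p) := by
      simp only [Set.disjoint_iUnion_right]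
      intro i hi
      exact hdisj a (Finset.mem_insert_self _ _) i (Finset.mem_insert_of_mem hi)
        (by rintro rfl; exact ha hi)
    rw [Finset.sum_insert ha, Finset.set_biUnion_insert, ih hdisj',
      Set.ncard_union_eq hd (Set.toFinite _) (Set.toFinite _)]

end Stmt17Aux


theorem stmt17 {VT VG : Type*} [Fintype VT] [Fintype VG]
    (AT : VT → VT → Prop) (AG : VG → VG → Prop)
    (hirrT : ∀ v, ¬ AT v v) (hirrG : ∀ v, ¬ AG v v)
    (hGconn : (ugr AG).Connected) (hGcard : 2 ≤ Fintype.card VG)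
    (hT : IsDitree AT)
    (heq : domNum (VT × VG) (cartArc AT AG) = domNum VT AT * domNum VG AG) :
    ¬ ∃ (v l1 l2 : VT), l1 ≠ l2 ∧
        (ugr AT).Adj v l1 ∧ (ugr AT).Adj v l2 ∧
        ((ugr AT).neighborSet l1).ncard = 1 ∧ ((ugr AT).neighborSet l2).ncard = 1 ∧
        (∃ u, AT u l1) ∧ (∃ u, AT u l2) := by
  classical
  rintro ⟨v, l1, l2, hne12, hadj1, hadj2, hnb1, hnb2, ⟨u1, hu1⟩, ⟨u2, hu2⟩⟩
  have hnbr : ∀ l : VT, (ugr AT).Adj v l → ((ugr AT).neighborSet l).ncard = 1 →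
      (ugr AT).neighborSet l = {v} := by
    intro l hadj hcard
    obtain ⟨a, ha⟩ := Set.ncard_eq_one.mp hcard
    have hv : v ∈ (ugr AT).neighborSet l := hadj.symm
    rw [ha] at hv ⊢
    rw [Set.mem_singleton_iff] at hv
    rw [hv]
  have hnbr1 := hnbr l1 hadj1 hnb1
  have hnbr2 := hnbr l2 hadj2 hnb2
  have honly : ∀ l : VT, (ugr AT).neighborSet l = {v} → ∀ t, AT t l → t = v := by
    intro l hl t ht
    have htl : l ≠ t := by intro hh; exact hirrT _ (hh ▸ ht)
    have hmem : t ∈ (ugr AT).neighborSet l := by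
      rw [SimpleGraph.mem_neighborSet]
      exact (SimpleGraph.fromRel_adj AT l t).mpr ⟨htl, Or.inr ht⟩
    rw [hl] at hmem
    exact hmem
  have honly1 := honly l1 hnbr1
  have honly2 := honly l2 hnbr2
  have hv1 : AT v l1 := by have h := honly1 u1 hu1; rwa [h] at hu1
  have hv2 : AT v l2 := by have h := honly2 u2 hu2; rwa [h] at hu2
  have hvl1 : v ≠ l1 := hadj1.ne
  have hvl2 : v ≠ l2 := hadj2.ne
  -- G has an arc
  have harc : ∃ a b : VG, AG a b := by
    by_contra hno
    push_neg at hno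
    have hbot : ∀ x y : VG, ¬ (ugr AG).Adj x y := by
      intro x y h
      rcases (SimpleGraph.fromRel_adj AG x y).mp h with ⟨_, h1 | h2⟩
      exacts [hno x y h1, hno y x h2]
    obtain ⟨a, b, hab⟩ := Fintype.exists_pair_of_one_lt_card (α := VG) (by omega)
    obtain ⟨w⟩ := hGconn.preconnected a b
    cases w with
    | nil => exact hab rfl
    | cons h p => exact hbot _ _ h
  obtain ⟨a0, b0, hab0⟩ := harc
  have hG1 : (domNum VG AG) + 1 ≤ Fintype.card VG := by
    have ha0b0 : a0 ≠ b0 := by rintro rfl; exact hirrG a0 hab0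
    have hds : IsDomSet AG (Set.univ \ {b0}) := by
      intro u
      by_cases hu : u = b0
      · subst hu
        exact ⟨a0, ⟨Set.mem_univ _, ha0b0⟩, Set.mem_insert_of_mem _ hab0⟩
      · exact ⟨u, ⟨Set.mem_univ _, hu⟩, Set.mem_insert _ _⟩
    have hle := Stmt17Aux.domNum_le hds
    have hc : (Set.univ \ {b0} : Set VG).ncard = Fintype.card VG - 1 := by
      rw [Set.ncard_diff_singleton_of_mem (Set.mem_univ _),
        Set.ncard_univ, Nat.card_eq_fintype_card (α := VG)]
    rw [hc] at hle
    omega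
  have hVGne : Nonempty VG := Fintype.card_pos_iff.mp (by omega)
  have hgGpos : 1 ≤ (domNum VG AG) := Stmt17Aux.domNum_pos AG
  have hgTpos : 1 ≤ (domNum VT AT) := @Stmt17Aux.domNum_pos VT _ ⟨v⟩ AT
  obtain ⟨gT', hgT'⟩ := Nat.exists_eq_add_of_le hgTpos
  -- minimum dominating set of the product
  obtain ⟨S, hS, hScard⟩ := Stmt17Aux.exists_min_domset (cartArc AT AG)
  rw [heq] at hScard
  set Arow : VT → Set VG := fun l => {g | (l, g) ∈ S} with hArow
  -- generic fiber bound
  have L1 : ∀ p : VT, (domNum VG AG) ≤ (S ∩ (NminusC AT p ×ˢ (Set.univ : Set VG))).ncard := by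
    intro p
    have hdp : IsDomSet AG (Prod.snd '' (S ∩ (NminusC AT p ×ˢ (Set.univ : Set VG)))) := by
      intro h
      obtain ⟨⟨t, g⟩, htg, hmem⟩ := hS (p, h)
      simp only [NplusC, Set.mem_insert_iff, Set.mem_setOf_eq, cartArc] at hmem
      rcases hmem with heqq | ⟨h1, h2⟩ | ⟨h1, h2⟩
      · obtain ⟨hp1, hp2⟩ := Prod.ext_iff.mp heqq
        refine ⟨h, ⟨(t, g), ⟨htg, ?_, Set.mem_univ _⟩, hp2.symm⟩, Set.mem_insert _ _⟩
        rw [← hp1]; exact Stmt17Aux.mem_NminusC_self AT p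
      · refine ⟨g, ⟨(t, g), ⟨htg, ?_, Set.mem_univ _⟩, rfl⟩, Set.mem_insert_of_mem _ h2⟩
        rw [h1]; exact Stmt17Aux.mem_NminusC_self AT p
      · refine ⟨h, ⟨(t, g), ⟨htg, Set.mem_insert_of_mem _ h2, Set.mem_univ _⟩, h1⟩,
          Set.mem_insert _ _⟩
    calc (domNum VG AG) ≤ (Prod.snd '' (S ∩ (NminusC AT p ×ˢ (Set.univ : Set VG)))).ncard :=
          Stmt17Aux.domNum_le hdp
      _ ≤ (S ∩ (NminusC AT p ×ˢ (Set.univ : Set VG))).ncard :=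
          Set.ncard_image_le (Set.toFinite _)
  -- leaf fiber structure
  have hfib : ∀ l : VT, (∀ t, AT t l → t = v) → ∀ h : VG,
      h ∈ Arow v ∨ ∃ g ∈ Arow l, h ∈ NplusC AG g := by
    intro l honlyl h
    obtain ⟨⟨t, g⟩, htg, hmem⟩ := hS (l, h)
    simp only [NplusC, Set.mem_insert_iff, Set.mem_setOf_eq, cartArc] at hmem
    rcases hmem with heqq | ⟨h1, h2⟩ | ⟨h1, h2⟩
    · rw [← heqq] at htg
      exact Or.inr ⟨h, htg, Set.mem_insert _ _⟩
    · rw [h1] at htg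
      exact Or.inr ⟨g, htg, Set.mem_insert_of_mem _ h2⟩
    · rw [honlyl t h2, h1] at htg
      exact Or.inl htg
  -- the special region bound
  have hX : (domNum VG AG) + 1 ≤ (Arow l1).ncard + (Arow l2).ncard + (Arow v).ncard := by
    have hcardv : Arow l1 = ∅ ∨ Arow l2 = ∅ → (Arow v).ncard = Fintype.card VG := by
      intro hcase
      have huniv : Arow v = Set.univ := by
        ext h
        simp only [Set.mem_univ, iff_true]
        rcases hcase with he | he
        · rcases hfib l1 honly1 h with h' | ⟨g, hg, _⟩
          · exact h'
          · rw [he] at hg; exact absurd hg (Set.notMem_empty g)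
        · rcases hfib l2 honly2 h with h' | ⟨g, hg, _⟩
          · exact h'
          · rw [he] at hg; exact absurd hg (Set.notMem_empty g)
      rw [huniv, Set.ncard_univ, Nat.card_eq_fintype_card]
    rcases (Arow l1).eq_empty_or_nonempty with he1 | hne1
    · have := hcardv (Or.inl he1); omega
    rcases (Arow l2).eq_empty_or_nonempty with he2 | hne2
    · have := hcardv (Or.inr he2); omega
    · have hds : IsDomSet AG (Arow l1 ∪ Arow v) := by
        intro h
        rcases hfib l1 honly1 h with h' | ⟨g, hg, hmem⟩
        · exact ⟨h, Or.inr h', Set.mem_insert _ _⟩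
        · exact ⟨g, Or.inl hg, hmem⟩
      have h1 := Stmt17Aux.domNum_le hds
      have h2 := Set.ncard_union_le (Arow l1) (Arow v)
      have h3 : 1 ≤ (Arow l2).ncard := (Set.ncard_pos (Set.toFinite _)).mpr hne2
      omega
  -- the packing from the greedy lemma
  obtain ⟨P, D, hPW, hpack, hDP, hdom⟩ :=
    Stmt17Aux.greedy AT hirrT hT v (Set.univ : Set VT).ncard Set.univ le_rfl
  have hDdom : IsDomSet AT D := by
    intro u
    obtain ⟨cc, hc, hcm⟩ := hdom u (Set.mem_univ u)
    exact ⟨cc, hc, (Stmt17Aux.mem_NplusC_iff AT).mpr hcm⟩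
  have hgTP : (domNum VT AT) ≤ P.ncard := le_trans (Stmt17Aux.domNum_le hDdom) hDP
  set Pbad := {p ∈ P | v ∈ NminusC AT p} with hPbad
  have hbadsub : Pbad ⊆ P := fun p hp => hp.1
  have hbadone : Pbad.ncard ≤ 1 := by
    rw [Set.ncard_le_one (Set.toFinite _)]
    intro p hp q hq
    by_contra hpq
    exact Set.disjoint_left.mp (hpack hp.1 hq.1 hpq) hp.2 hq.2
  set P' := P \ Pbad with hP'
  have hP'card : gT' ≤ P'.ncard := by
    have h1 := Set.ncard_le_ncard_diff_add_ncard P Pbad (Set.toFinite _)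
    rw [← hP'] at h1
    omega
  have hP'v : ∀ p ∈ P', v ∉ NminusC AT p := fun p hp hv => hp.2 ⟨hp.1, hv⟩
  have hP'l : ∀ p ∈ P', ∀ l : VT, (ugr AT).neighborSet l = {v} → AT v l →
      l ∉ NminusC AT p := by
    intro p hp l hnbrl hvl hl
    apply hP'v p hp
    simp only [NminusC, Set.mem_insert_iff, Set.mem_setOf_eq] at hl
    rcases hl with rfl | hl
    · exact Set.mem_insert_of_mem _ hvl
    · have hpl : l ≠ p := by intro hh; exact hirrT _ (hh ▸ hl)
      have hpmem : p ∈ (ugr AT).neighborSet l :=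
        (SimpleGraph.fromRel_adj AT l p).mpr ⟨hpl, Or.inl hl⟩
      rw [hnbrl, Set.mem_singleton_iff] at hpmem
      rw [hpmem]
      exact Stmt17Aux.mem_NminusC_self AT v
  -- counting
  set Q := P'.toFinite.toFinset with hQ
  set R : VT → Set (VT × VG) := fun p => S ∩ (NminusC AT p ×ˢ (Set.univ : Set VG)) with hR
  have hQdisj : ∀ p ∈ Q, ∀ q ∈ Q, p ≠ q → Disjoint (R p) (R q) := by
    intro p hp q hq hpq
    rw [Set.Finite.mem_toFinset] at hp hq
    have hd := hpack hp.1 hq.1 hpq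
    rw [Set.disjoint_left]
    rintro ⟨t, g⟩ ⟨_, ht1, _⟩ ⟨_, ht2, _⟩
    exact Set.disjoint_left.mp hd ht1 ht2
  have hsum := Stmt17Aux.sum_ncard_eq Q R hQdisj
  have hterms : Q.card * (domNum VG AG) ≤ ∑ p ∈ Q, (R p).ncard := by
    have h := Finset.card_nsmul_le_sum Q (fun p => (R p).ncard) (domNum VG AG) (fun p _ => L1 p)
    simpa using h
  have hQcard : Q.card = P'.ncard := by
    rw [hQ, ← Set.ncard_eq_toFinset_card P' P'.toFinite]
  rw [hQcard] at hterms
  set X := ((fun g => (l1, g)) '' Arow l1) ∪ ((fun g => (l2, g)) '' Arow l2) ∪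
    ((fun g => (v, g)) '' Arow v) with hXdef
  have hrowcard : ∀ l : VT, ((fun g => (l, g)) '' Arow l).ncard = (Arow l).ncard := fun l =>
    Set.ncard_image_of_injective _ (fun a b hab => (Prod.ext_iff.mp hab).2)
  have hrowdisj : ∀ l l' : VT, l ≠ l' →
      Disjoint ((fun g => (l, g)) '' Arow l) ((fun g => (l', g)) '' Arow l') := by
    intro l l' hll
    rw [Set.disjoint_left]
    rintro x ⟨g, _, rfl⟩ ⟨g', _, hg'⟩
    exact hll (Prod.ext_iff.mp hg'.symm).1
  have hXcard : (domNum VG AG) + 1 ≤ X.ncard := by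
    rw [hXdef, Set.ncard_union_eq ?_ (Set.toFinite _) (Set.toFinite _),
      Set.ncard_union_eq (hrowdisj l1 l2 hne12) (Set.toFinite _) (Set.toFinite _),
      hrowcard, hrowcard, hrowcard]
    · omega
    · exact Set.disjoint_union_left.mpr
        ⟨hrowdisj l1 v (Ne.symm hvl1), hrowdisj l2 v (Ne.symm hvl2)⟩
  have hXS : X ⊆ S := by
    rintro x ((⟨g, hg, rfl⟩ | ⟨g, hg, rfl⟩) | ⟨g, hg, rfl⟩) <;> exact hg
  have hUS : (⋃ p ∈ Q, R p) ⊆ S := by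
    intro x hx
    simp only [Set.mem_iUnion] at hx
    obtain ⟨p, _, hx1, _⟩ := hx
    exact hx1
  have hXU : Disjoint X (⋃ p ∈ Q, R p) := by
    simp only [Set.disjoint_iUnion_right]
    intro p hp
    rw [Set.Finite.mem_toFinset] at hp
    rw [Set.disjoint_left]
    rintro x ((⟨g, hg, rfl⟩ | ⟨g, hg, rfl⟩) | ⟨g, hg, rfl⟩) ⟨_, hmem, _⟩
    · exact hP'l p hp l1 hnbr1 hv1 hmem
    · exact hP'l p hp l2 hnbr2 hv2 hmem
    · exact hP'v p hp hmem
  have hfinal : (⋃ p ∈ Q, R p).ncard + X.ncard ≤ S.ncard := by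
    rw [← Set.ncard_union_eq hXU.symm (Set.toFinite _) (Set.toFinite _)]
    exact Set.ncard_le_ncard (Set.union_subset hUS hXS) S.toFinite
  have hmulle : gT' * (domNum VG AG) ≤ P'.ncard * (domNum VG AG) :=
    Nat.mul_le_mul_right _ hP'card
  have hmul : (1 + gT') * (domNum VG AG) = gT' * (domNum VG AG) + (domNum VG AG) := by ring
  rw [hgT'] at hScard
  omega
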